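/- Topological complexity is a homotopy invariant: if X and Y are path-connected spaces that are homotopy equivalent, then TC(X) = TC(Y). -/

import Mathlib

open unitInterval

/-- The endpoint map `p : P(X) → X × X`, `p(σ) = (σ(0), σ(1))`, on the space of paths
`C([0,1], X)` with the compact-open topology. -/
def pathEndpoints (X : Type*) [TopologicalSpace X] : C(unitInterval, X) → X × X :=
  fun γ => (γ 0, γ 1)

/-- `TCle X k` : `X × X` admits a cover by `k` open sets, each with a continuous section of the
endpoint map. -/
def TCle (X : Type*) [TopologicalSpace X] (k : ℕ) : Prop :=
  ∃ (U : Fin k → Set (X × X)) (s : Fin k → (X × X) → C(unitInterval, X)),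
    (∀ i, IsOpen (U i)) ∧ (⋃ i, U i) = Set.univ ∧
    ∀ i, ContinuousOn (s i) (U i) ∧ ∀ p ∈ U i, pathEndpoints X (s i p) = p

/-- Farber's topological complexity, valued in `ℕ∞` (so `topComplexity X = ⊤`, i.e. `∞`, if no
finite cover works). -/
noncomputable def topComplexity (X : Type*) [TopologicalSpace X] : ℕ∞ :=
  sInf {n : ℕ∞ | ∃ k : ℕ, n = k ∧ TCle X k}

section Aux

open ContinuousMap

variable {X Y : Type*} [TopologicalSpace X] [TopologicalSpace Y]

/-- For a homotopy `H : g ∘ f ≃ id`, the path from `g (f a)` to `a` given by `t ↦ H (t, a)`. -/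
noncomputable def TChomPath (f : C(X, Y)) (g : C(Y, X))
    (H : Homotopy (g.comp f) (ContinuousMap.id X)) (a : X) : Path (g (f a)) a where
  toFun := fun t => H (t, a)
  continuous_toFun := H.continuous.comp (continuous_id.prodMk continuous_const)
  source' := H.apply_zero a
  target' := H.apply_one a

/-- Domination lemma: if `g ∘ f ≃ id_X`, then `TCle Y k → TCle X k`. -/
lemma TCle.of_dom [Nonempty X] (f : C(X, Y)) (g : C(Y, X))
    (H : Homotopy (g.comp f) (ContinuousMap.id X)) {k : ℕ} (hY : TCle Y k) : TCle X k := by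
  classical
  obtain ⟨V, s, hVo, hVc, hs⟩ := hY
  have Fc : Continuous (fun p : X × X => (f p.1, f p.2)) :=
    (f.continuous.comp continuous_fst).prodMk (f.continuous.comp continuous_snd)
  set U : Fin k → Set (X × X) := fun i => (fun p : X × X => (f p.1, f p.2)) ⁻¹' V i with hU
  have key : ∀ i, ∃ sg : (X × X) → C(unitInterval, X),
      ContinuousOn sg (U i) ∧ ∀ p ∈ U i, pathEndpoints X (sg p) = p := by
    intro i
    have hsC := (hs i).1
    have hsE := (hs i).2
    have hmem : ∀ q : ↥(U i), (f (q : X × X).1, f (q : X × X).2) ∈ V i := fun q => q.2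
    have h0 : ∀ q : ↥(U i), s i (f (q : X × X).1, f (q : X × X).2) 0 = f (q : X × X).1 :=
      fun q => congrArg Prod.fst (hsE _ (hmem q))
    have h1 : ∀ q : ↥(U i), s i (f (q : X × X).1, f (q : X × X).2) 1 = f (q : X × X).2 :=
      fun q => congrArg Prod.snd (hsE _ (hmem q))
    -- middle path family
    set mid : ∀ q : ↥(U i),
        Path (g (f (q : X × X).1)) (g (f (q : X × X).2)) := fun q =>
      { toFun := fun t => g (s i (f (q : X × X).1, f (q : X × X).2) t)
        continuous_toFun := g.continuous.comp (map_continuous _)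
        source' := congrArg g (h0 q)
        target' := congrArg g (h1 q) } with hmid
    set Γ : ∀ q : ↥(U i), Path (q : X × X).1 (q : X × X).2 := fun q =>
      ((TChomPath f g H (q : X × X).1).symm.trans (mid q)).trans
        (TChomPath f g H (q : X × X).2) with hΓ
    -- continuity of the three families
    have c1 : Continuous ↿(fun q : ↥(U i) => TChomPath f g H (q : X × X).1) := by
      show Continuous fun p : ↥(U i) × unitInterval => H (p.2, (p.1 : X × X).1)
      exact H.continuous.comp (continuous_snd.prodMk
        (continuous_fst.comp (continuous_subtype_val.comp continuous_fst)))
    have c1' : Continuous ↿(fun q : ↥(U i) => (TChomPath f g H (q : X × X).1).symm) :=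
      Path.symm_continuous_family _ c1
    have c3 : Continuous ↿(fun q : ↥(U i) => TChomPath f g H (q : X × X).2) := by
      show Continuous fun p : ↥(U i) × unitInterval => H (p.2, (p.1 : X × X).2)
      exact H.continuous.comp (continuous_snd.prodMk
        (continuous_snd.comp (continuous_subtype_val.comp continuous_fst)))
    have hψ : Continuous (fun q : ↥(U i) =>
        s i (f (q : X × X).1, f (q : X × X).2)) := by
      have : (fun q : ↥(U i) => s i (f (q : X × X).1, f (q : X × X).2)) =
          ((V i).restrict (s i)) ∘ (fun q : ↥(U i) =>
            (⟨(f (q : X × X).1, f (q : X × X).2), hmem q⟩ : ↥(V i))) := rfl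
      rw [this]
      exact (continuousOn_iff_continuous_restrict.mp hsC).comp
        (Continuous.subtype_mk (Fc.comp continuous_subtype_val) _)
    have c2 : Continuous ↿mid := by
      show Continuous fun p : ↥(U i) × unitInterval =>
        g (s i (f (p.1 : X × X).1, f (p.1 : X × X).2) p.2)
      exact g.continuous.comp (continuous_eval.comp
        ((hψ.comp continuous_fst).prodMk continuous_snd))
    have cΓ : Continuous ↿Γ :=
      Path.trans_continuous_family _ (Path.trans_continuous_family _ c1' _ c2) _ c3
    have cσ0 : Continuous (fun q : ↥(U i) => (Γ q).toContinuousMap) :=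
      ContinuousMap.continuous_of_continuous_uncurry _ cΓ
    refine ⟨fun p => if hp : p ∈ U i then (Γ ⟨p, hp⟩).toContinuousMap
      else ContinuousMap.const _ (Classical.arbitrary X), ?_, ?_⟩
    · rw [continuousOn_iff_continuous_restrict]
      have : (U i).restrict (fun p => if hp : p ∈ U i then (Γ ⟨p, hp⟩).toContinuousMap
          else ContinuousMap.const _ (Classical.arbitrary X)) =
          fun q : ↥(U i) => (Γ q).toContinuousMap := by
        funext q
        simp [Set.restrict, q.2]
      exact (congrArg Continuous this).mpr cσ0
    · intro p hp
      dsimp only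
      rw [dif_pos hp]
      simp [pathEndpoints]
  choose sg hσC hσE using key
  exact ⟨U, sg, fun i => (hVo i).preimage Fc, by
    apply Set.eq_univ_iff_forall.mpr
    intro p
    have : (f p.1, f p.2) ∈ ⋃ i, V i := by rw [hVc]; trivial
    obtain ⟨_, ⟨i, rfl⟩, hi⟩ := this
    exact Set.mem_iUnion.mpr ⟨i, hi⟩, fun i => ⟨hσC i, hσE i⟩⟩

lemma topComplexity_le_of_dom [Nonempty X] (f : C(X, Y)) (g : C(Y, X))
    (H : Homotopy (g.comp f) (ContinuousMap.id X)) :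
    topComplexity X ≤ topComplexity Y := by
  apply sInf_le_sInf
  rintro n ⟨k, rfl, hk⟩
  exact ⟨k, rfl, TCle.of_dom f g H hk⟩

end Aux

/-- Topological complexity is a homotopy invariant: homotopy equivalent path-connected spaces
have equal topological complexity. -/
theorem stmt_2 (X Y : Type*) [TopologicalSpace X] [TopologicalSpace Y]
    [PathConnectedSpace X] [PathConnectedSpace Y]
    (h : ContinuousMap.HomotopyEquiv X Y) :
    topComplexity X = topComplexity Y := by
  have hX : Nonempty X := inferInstance
  have hY : Nonempty Y := inferInstance
  refine le_antisymm ?_ ?_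
  · exact topComplexity_le_of_dom h.toFun h.invFun h.left_inv.some
  · exact topComplexity_le_of_dom h.symm.toFun h.symm.invFun h.symm.left_inv.some
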